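/- For every n ≥ 3, there exists a cyclic sequence of n(n−1) triangulations of the path graph model of the cyclohedron, given as follows: there is a cyclic sequence of n(n−1) maximal tubings of the cycle C_n, each nested, with consecutive tubings differing by exchanging exactly one tube, and such that every tube of C_n appears in the tubings of exactly one nonempty contiguous cyclic interval of the sequence. -/

import Mathlib

/-- A tube of a graph `G` is a nonempty proper subset of the vertices inducing a
connected subgraph. -/
def IsTube {V : Type*} [Fintype V] [DecidableEq V] (G : SimpleGraph V) (t : Finset V) : Prop :=
  t.Nonempty ∧ t ≠ Finset.univ ∧ (G.induce (t : Set V)).Connected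

/-- Two tubes are compatible if they are nested or non-adjacent. -/
def TubeCompat {V : Type*} [Fintype V] [DecidableEq V] (G : SimpleGraph V)
    (t₁ t₂ : Finset V) : Prop :=
  t₁ ⊆ t₂ ∨ t₂ ⊆ t₁ ∨ ¬ (G.induce ((t₁ ∪ t₂ : Finset V) : Set V)).Connected

/-- A tubing is a set of pairwise compatible tubes. -/
def IsTubing {V : Type*} [Fintype V] [DecidableEq V] (G : SimpleGraph V)
    (T : Finset (Finset V)) : Prop :=
  (∀ t ∈ T, IsTube G t) ∧ (T : Set (Finset V)).Pairwise (TubeCompat G)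

/-- An inclusion-maximal tubing. -/
def IsMaxTubing {V : Type*} [Fintype V] [DecidableEq V] (G : SimpleGraph V)
    (T : Finset (Finset V)) : Prop :=
  IsTubing G T ∧ ∀ T', IsTubing G T' → T ⊆ T' → T' = T

set_option linter.unusedSectionVars false
set_option maxHeartbeats 1000000

open Finset SimpleGraph
open scoped Fin.NatCast Fin.IntCast Fin.CommRing
variable {n : ℕ} [NeZero n]

def itv (a : Fin n) (k : ℕ) : Finset (Fin n) :=
  (Finset.range k).image (fun i : ℕ => a + (i : Fin n))

lemma mem_itv {a : Fin n} {k : ℕ} {v : Fin n} : v ∈ itv a k ↔ ∃ i, i < k ∧ v = a + (i : Fin n) := by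
  simp [itv, eq_comm]

lemma self_mem_itv {a : Fin n} {k : ℕ} (hk : 1 ≤ k) : a ∈ itv a k :=
  mem_itv.2 ⟨0, hk, by simp⟩

/-- the start of the `k`-th tube at time `x` -/
def stt (n : ℕ) [NeZero n] (x k : ℕ) : Fin n := -(((x + k - 1) / (n-1) : ℕ) : Fin n)

def tb (n : ℕ) [NeZero n] (x k : ℕ) : Finset (Fin n) := itv (stt n x k) k

def Tn (n : ℕ) [NeZero n] (x : ℕ) : Finset (Finset (Fin n)) :=
  (Finset.range (n-1)).image (fun k => tb n x (k+1))

lemma mem_Tn {x : ℕ} {t : Finset (Fin n)} :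
    t ∈ Tn n x ↔ ∃ k, 1 ≤ k ∧ k ≤ n - 1 ∧ t = tb n x k := by
  simp only [Tn, Finset.mem_image, Finset.mem_range]
  constructor
  · rintro ⟨k, hk, rfl⟩; exact ⟨k+1, by omega, by omega, rfl⟩
  · rintro ⟨k, hk1, hk2, rfl⟩; exact ⟨k-1, by omega, by rw [show k-1+1 = k by omega]⟩

lemma tb_subset_succ (x : ℕ) {k : ℕ} (hk : 1 ≤ k) : tb n x k ⊆ tb n x (k+1) := by
  intro v hv
  obtain ⟨i, hi, rfl⟩ := mem_itv.1 hv
  have hstep : (x + (k+1) - 1) / (n-1) = (x+k-1)/(n-1) ∨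
      (x + (k+1) - 1) / (n-1) = (x+k-1)/(n-1) + 1 := by
    rw [show x + (k+1) - 1 = (x + k - 1) + 1 by omega, Nat.succ_div]
    split_ifs
    · right; rfl
    · left; omega
  rcases hstep with h | h
  · refine mem_itv.2 ⟨i, by omega, ?_⟩
    show stt n x k + (i : Fin n) = stt n x (k+1) + (i : Fin n)
    simp only [stt, h]
  · refine mem_itv.2 ⟨i + 1, by omega, ?_⟩
    show stt n x k + (i : Fin n) = stt n x (k+1) + ((i+1 : ℕ) : Fin n)
    rw [stt, stt, h]
    push_cast
    ring

lemma tb_subset (x : ℕ) {k l : ℕ} (hk : 1 ≤ k) (hkl : k ≤ l) : tb n x k ⊆ tb n x l := by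
  induction l with
  | zero => omega
  | succ l ih =>
    rcases Nat.lt_or_ge k (l+1) with h | h
    · exact (ih (by omega)).trans (tb_subset_succ x (by omega))
    · have : k = l + 1 := by omega
      subst this; exact subset_rfl

lemma card_itv {a : Fin n} {k : ℕ} (hk : k ≤ n) : (itv a k).card = k := by
  rw [itv, Finset.card_image_of_injOn, Finset.card_range]
  intro i hi j hj hij
  simp only [Finset.coe_range, Set.mem_Iio] at hi hj
  have : (i : Fin n) = (j : Fin n) := add_left_cancel hij
  have hv := congrArg Fin.val this
  rwa [Fin.val_natCast, Fin.val_natCast, Nat.mod_eq_of_lt (lt_of_lt_of_le hi hk),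
    Nat.mod_eq_of_lt (lt_of_lt_of_le hj hk)] at hv

lemma card_tb {x k : ℕ} (hk : k ≤ n) : (tb n x k).card = k := card_itv hk

lemma sub_one_not_mem_itv {a : Fin n} {k : ℕ} (hk : k ≤ n - 1) : a - 1 ∉ itv a k := by
  intro h
  obtain ⟨i, hi, hv⟩ := mem_itv.1 h
  have h1 : ((i + 1 : ℕ) : Fin n) = 0 := by push_cast; linear_combination -hv
  have hval := congrArg Fin.val h1
  rw [Fin.val_natCast, Fin.val_zero] at hval
  have hn1 : 1 ≤ n := Nat.one_le_iff_ne_zero.2 (NeZero.ne n)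
  rw [Nat.mod_eq_of_lt (by omega)] at hval
  omega

lemma itv_start_inj {a b : Fin n} {k : ℕ} (hk1 : 1 ≤ k) (hk : k ≤ n - 1)
    (h : itv a k = itv b k) : a = b := by
  by_contra hab
  have ha : a ∈ itv b k := h ▸ self_mem_itv hk1
  obtain ⟨i, hi, hv⟩ := mem_itv.1 ha
  have hi0 : i ≠ 0 := by rintro rfl; simp at hv; exact hab (hv.trans (by simp))
  have hmem : a - 1 ∈ itv b k := by
    rw [hv]
    refine mem_itv.2 ⟨i - 1, by omega, ?_⟩
    have hc : ((i - 1 : ℕ) : Fin n) + 1 = (i : Fin n) := by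
      rw [show i = (i-1) + 1 by omega]; push_cast; ring
    linear_combination -hc
  rw [← h] at hmem
  exact sub_one_not_mem_itv hk hmem

/-- the unique k in [1, n-1] whose tube flips between time x and x+1 -/
def flipK (n x : ℕ) : ℕ := (n-1) - x % (n-1)

lemma mod_add_eq_zero_iff {m x k : ℕ} (hm : 0 < m) (hk1 : 1 ≤ k) (hk : k ≤ m) :
    (x + k) % m = 0 ↔ k = m - x % m := by
  have hr : x % m < m := Nat.mod_lt _ hm
  rw [Nat.add_mod]
  rcases Nat.lt_or_ge k m with hkm | hkm
  · rw [Nat.mod_eq_of_lt hkm]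
    rcases Nat.lt_or_ge (x % m + k) m with h | h
    · rw [Nat.mod_eq_of_lt h]; omega
    · rw [Nat.mod_eq_sub_mod h, Nat.mod_eq_of_lt (by omega)]; omega
  · have : k = m := by omega
    subst this
    rw [Nat.mod_self, Nat.add_zero, Nat.mod_mod_of_dvd x dvd_rfl]
    omega

lemma flipK_spec (hn : 3 ≤ n) (x : ℕ) :
    1 ≤ flipK n x ∧ flipK n x ≤ n - 1 ∧
      ∀ k, 1 ≤ k → k ≤ n - 1 → ((n-1) ∣ (x + k) ↔ k = flipK n x) := by
  have hm : 0 < n - 1 := by omega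
  have hr : x % (n-1) < n - 1 := Nat.mod_lt _ hm
  refine ⟨by unfold flipK; omega, by unfold flipK; omega, fun k hk1 hk2 => ?_⟩
  rw [Nat.dvd_iff_mod_eq_zero, mod_add_eq_zero_iff hm hk1 hk2]
  rfl

lemma tb_succ_eq {x k : ℕ} (hk1 : 1 ≤ k) (h : ¬ (n-1) ∣ (x + k)) :
    tb n (x+1) k = tb n x k := by
  have : (x + 1 + k - 1) / (n-1) = (x + k - 1) / (n-1) := by
    rw [show x + 1 + k - 1 = (x + k - 1) + 1 by omega, Nat.succ_div,
      if_neg (by rw [show x + k - 1 + 1 = x + k by omega]; exact h)]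
    omega
  rw [tb, tb, stt, stt, this]

lemma tb_succ_ne (hn : 3 ≤ n) {x k : ℕ} (hk1 : 1 ≤ k) (hk2 : k ≤ n - 1)
    (h : (n-1) ∣ (x + k)) : tb n (x+1) k ≠ tb n x k := by
  have hdiv : (x + 1 + k - 1) / (n-1) = (x + k - 1) / (n-1) + 1 := by
    rw [show x + 1 + k - 1 = (x + k - 1) + 1 by omega, Nat.succ_div,
      if_pos (by rw [show x + k - 1 + 1 = x + k by omega]; exact h)]
  intro heq
  have := itv_start_inj hk1 hk2 heq
  rw [stt, stt, hdiv] at this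
  have h1 : ((1:ℕ) : Fin n) = 0 := by push_cast at this ⊢; linear_combination -this
  have hval := congrArg Fin.val h1
  rw [Fin.val_natCast, Fin.val_zero, Nat.mod_eq_of_lt (by omega)] at hval
  omega

lemma tb_card_eq {x y k k' : ℕ} (hk : k ≤ n) (hk' : k' ≤ n)
    (h : tb n x k = tb n y k') : k = k' := by
  have := congrArg Finset.card h
  rwa [card_tb hk, card_tb hk'] at this

lemma Tn_sdiff₁ (hn : 3 ≤ n) (x : ℕ) :
    Tn n x \ Tn n (x+1) = {tb n x (flipK n x)} := by
  obtain ⟨hf1, hf2, hfk⟩ := flipK_spec hn x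
  ext s
  rw [Finset.mem_sdiff, Finset.mem_singleton]
  constructor
  · rintro ⟨hs1, hs2⟩
    obtain ⟨k, hk1, hk2, rfl⟩ := mem_Tn.1 hs1
    by_contra hne
    have hknf : k ≠ flipK n x := fun h => hne (by rw [h])
    have : tb n (x+1) k = tb n x k :=
      tb_succ_eq hk1 (fun hd => hknf ((hfk k hk1 hk2).1 hd))
    exact hs2 (mem_Tn.2 ⟨k, hk1, hk2, this.symm⟩)
  · rintro rfl
    refine ⟨mem_Tn.2 ⟨flipK n x, hf1, hf2, rfl⟩, fun hmem => ?_⟩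
    obtain ⟨k, hk1, hk2, heq⟩ := mem_Tn.1 hmem
    have hkk : flipK n x = k := tb_card_eq (by omega) (by omega) heq
    subst hkk
    exact tb_succ_ne hn hf1 hf2 ((hfk _ hf1 hf2).2 rfl) heq.symm

lemma Tn_sdiff₂ (hn : 3 ≤ n) (x : ℕ) :
    Tn n (x+1) \ Tn n x = {tb n (x+1) (flipK n x)} := by
  obtain ⟨hf1, hf2, hfk⟩ := flipK_spec hn x
  ext s
  rw [Finset.mem_sdiff, Finset.mem_singleton]
  constructor
  · rintro ⟨hs1, hs2⟩
    obtain ⟨k, hk1, hk2, rfl⟩ := mem_Tn.1 hs1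
    by_contra hne
    have hknf : k ≠ flipK n x := fun h => hne (by rw [h])
    have : tb n (x+1) k = tb n x k :=
      tb_succ_eq hk1 (fun hd => hknf ((hfk k hk1 hk2).1 hd))
    exact hs2 (mem_Tn.2 ⟨k, hk1, hk2, this⟩)
  · rintro rfl
    refine ⟨mem_Tn.2 ⟨flipK n x, hf1, hf2, rfl⟩, fun hmem => ?_⟩
    obtain ⟨k, hk1, hk2, heq⟩ := mem_Tn.1 hmem
    have hkk : flipK n x = k := tb_card_eq (by omega) (by omega) heq
    subst hkk
    exact tb_succ_ne hn hf1 hf2 ((hfk _ hf1 hf2).2 rfl) heq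

lemma tb_period (hn : 3 ≤ n) (x k : ℕ) (hk : 1 ≤ k) :
    tb n (x + n*(n-1)) k = tb n x k := by
  have hdiv : (x + n*(n-1) + k - 1) / (n-1) = (x + k - 1)/(n-1) + n := by
    rw [show x + n*(n-1) + k - 1 = (x + k - 1) + n * (n-1) by omega,
      Nat.add_mul_div_right _ _ (show 0 < n - 1 by omega)]
  rw [tb, tb, stt, stt, hdiv]
  congr 1
  push_cast [Fin.natCast_self]
  ring

lemma Tn_period (hn : 3 ≤ n) (x : ℕ) : Tn n (x + n*(n-1)) = Tn n x := by
  unfold Tn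
  apply Finset.image_congr
  intro k hk
  exact tb_period hn x (k+1) (by omega)

lemma Tn_mod (hn : 3 ≤ n) (x : ℕ) : Tn n (x % (n*(n-1))) = Tn n x := by
  conv_rhs => rw [show x = x % (n*(n-1)) + (n*(n-1)) * (x / (n*(n-1))) by
    rw [Nat.mod_add_div]]
  generalize x % (n*(n-1)) = r
  generalize x / (n*(n-1)) = d
  induction d with
  | zero => simp
  | succ d ih =>
    rw [show r + n*(n-1) * (d+1) = (r + n*(n-1)*d) + n*(n-1) by ring, Tn_period hn, ih]
lemma itv_connected (hn : 3 ≤ n) (a : Fin n) {k : ℕ} (hk1 : 1 ≤ k) :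
    ((SimpleGraph.cycleGraph n).induce ((itv a k : Finset (Fin n)) : Set (Fin n))).Connected := by
  have ha : a ∈ ((itv a k : Finset (Fin n)) : Set (Fin n)) := by
    exact_mod_cast self_mem_itv hk1
  have key : ∀ i, i < k → ∀ (h : (a + (i:Fin n)) ∈ ((itv a k : Finset (Fin n)) : Set (Fin n))),
      ((SimpleGraph.cycleGraph n).induce ((itv a k : Finset (Fin n)) : Set (Fin n))).Reachable
        ⟨a, ha⟩ ⟨a + (i:Fin n), h⟩ := by
    intro i
    induction i with
    | zero =>
      intro _ h
      have e : (⟨a + ((0:ℕ):Fin n), h⟩ : ((itv a k : Finset (Fin n)) : Set (Fin n))) = ⟨a, ha⟩ :=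
        Subtype.ext (by simp)
      rw [e]
    | succ i ih =>
      intro hik h
      have hmem : (a + (i:Fin n)) ∈ ((itv a k : Finset (Fin n)) : Set (Fin n)) := by
        exact_mod_cast mem_itv.2 ⟨i, by omega, rfl⟩
      have hadj : (SimpleGraph.cycleGraph n).Adj (a + (i:Fin n)) (a + ((i+1:ℕ):Fin n)) := by
        rw [SimpleGraph.cycleGraph_adj']
        right
        have h1 : (a + ((i+1:ℕ):Fin n)) - (a + (i:Fin n)) = ((1:ℕ):Fin n) := by push_cast; ring
        rw [h1, Fin.val_natCast, Nat.mod_eq_of_lt (by omega)]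
      have hadj' : ((SimpleGraph.cycleGraph n).induce ((itv a k : Finset (Fin n)) : Set (Fin n))).Adj
          ⟨a + (i:Fin n), hmem⟩ ⟨a + ((i+1:ℕ):Fin n), h⟩ := hadj
      exact (ih (by omega) hmem).trans hadj'.reachable
  rw [SimpleGraph.connected_iff]
  refine ⟨?_, ⟨⟨a, ha⟩⟩⟩
  rintro ⟨u, hu⟩ ⟨v, hv⟩
  obtain ⟨i, hi, rfl⟩ := mem_itv.1 (by exact_mod_cast hu)
  obtain ⟨j, hj, rfl⟩ := mem_itv.1 (by exact_mod_cast hv)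
  exact (key i hi hu).symm.trans (key j hj hv)

lemma univ_connected (hn : 3 ≤ n) :
    ((SimpleGraph.cycleGraph n).induce ((Finset.univ : Finset (Fin n)) : Set (Fin n))).Connected := by
  rw [Finset.coe_univ]
  have hc : (SimpleGraph.cycleGraph n).Connected := by
    obtain ⟨m, rfl⟩ : ∃ m, n = m + 1 := ⟨n - 1, by omega⟩
    exact SimpleGraph.cycleGraph_connected
  exact ((SimpleGraph.induceUnivIso (SimpleGraph.cycleGraph n)).connected_iff).2 hc
lemma neg_one_eq (hn : 1 ≤ n) : (-1 : Fin n) = ((n - 1 : ℕ) : Fin n) := by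
  have h2 : (((n-1)+1 : ℕ) : Fin n) = 0 := by
    rw [show n-1+1 = n by omega]; exact Fin.natCast_self n
  push_cast at h2
  linear_combination -h2

lemma val_eq_last_iff (hn : 1 ≤ n) {x : Fin n} : x.val = n - 1 ↔ x = -1 := by
  constructor
  · intro h
    have : x = ((x.val : ℕ) : Fin n) := (Fin.cast_val_eq_self x).symm
    rw [this, h, ← neg_one_eq hn]
  · rintro rfl
    rw [neg_one_eq hn, Fin.val_natCast, Nat.mod_eq_of_lt (by omega)]

lemma val_add_one_of_ne (hn : 1 ≤ n) {x : Fin n} (h : x ≠ -1) : (x + 1).val = x.val + 1 := by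
  have hlt : x.val < n - 1 := by
    have := x.isLt
    rcases Nat.lt_or_ge x.val (n-1) with h' | h'
    · exact h'
    · exact absurd ((val_eq_last_iff hn).1 (by omega)) h
  have h1 : x + 1 = ((x.val + 1 : ℕ) : Fin n) := by
    push_cast [Fin.cast_val_eq_self]
    ring
  rw [h1, Fin.val_natCast, Nat.mod_eq_of_lt (by omega)]

lemma walk_ivt {s : Set (Fin n)} (f : Fin n → ℕ)
    (hadj : ∀ u v : s, ((SimpleGraph.cycleGraph n).induce s).Adj u v →
      f u = f v + 1 ∨ f v = f u + 1) :
    ∀ {u v : s} (_ : ((SimpleGraph.cycleGraph n).induce s).Walk u v) (r : ℕ),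
      f u ≤ r → r ≤ f v → ∃ x ∈ s, f x = r := by
  intro u v w
  induction w with
  | nil =>
    rename_i z
    intro r h1 h2
    exact ⟨z, z.2, by omega⟩
  | cons hadj' p ih =>
    rename_i z b v2
    intro r h1 h2
    rcases hadj z b hadj' with h | h
    · exact ih r (by omega) h2
    · rcases le_or_gt (f b) r with h' | h'
      · exact ih r h' h2
      · exact ⟨z, z.2, by omega⟩

lemma tube_eq_itv (hn : 3 ≤ n) {t : Finset (Fin n)} (ht : t.Nonempty) (htu : t ≠ Finset.univ)
    (hconn : ((SimpleGraph.cycleGraph n).induce (t : Set (Fin n))).Connected) :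
    ∃ a k, 1 ≤ k ∧ k ≤ n - 1 ∧ t = itv a k := by
  have hn1 : 1 ≤ n := by omega
  obtain ⟨c, hc⟩ : ∃ c, c ∉ t := by
    by_contra h
    push_neg at h
    exact htu (Finset.eq_univ_iff_forall.2 h)
  set f : Fin n → ℕ := fun v => (v - (c+1)).val with hf
  have finj : Function.Injective f := by
    intro x y hxy
    have : x - (c+1) = y - (c+1) := Fin.val_injective hxy
    linear_combination this
  have fne : ∀ v ∈ t, f v ≤ n - 2 := by
    intro v hv
    have hvn : v ≠ c := fun h => hc (h ▸ hv)
    have hfv' : f v = (v - (c+1)).val := rfl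
    have : f v ≠ n - 1 := by
      intro h
      have : v - (c+1) = -1 := (val_eq_last_iff hn1).1 (by omega)
      exact hvn (by linear_combination this)
    have := (v - (c+1)).isLt
    omega
  have hadjf : ∀ u v : (t : Set (Fin n)),
      ((SimpleGraph.cycleGraph n).induce (t : Set (Fin n))).Adj u v →
        f u = f v + 1 ∨ f v = f u + 1 := by
    rintro ⟨u, hu⟩ ⟨v, hv⟩ hadj
    have hadj2 : (SimpleGraph.cycleGraph n).Adj u v := hadj
    rw [SimpleGraph.cycleGraph_adj'] at hadj2
    have hu' : u ∈ t := by exact_mod_cast hu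
    have hv' : v ∈ t := by exact_mod_cast hv
    have step : ∀ x y : Fin n, x ∈ t → y ∈ t → (x - y).val = 1 → f x = f y + 1 := by
      intro x y hx hy hxy
      have hxy' : x - y = ((1:ℕ) : Fin n) := by
        rw [← Fin.cast_val_eq_self (x - y), hxy]
      have hx2 : x = y + 1 := by push_cast at hxy'; linear_combination hxy'
      have hyne : y - (c+1) ≠ -1 := by
        intro h
        have hyc : y = c := by linear_combination h
        exact hc (hyc ▸ hy)
      have : x - (c+1) = (y - (c+1)) + 1 := by rw [hx2]; ring
      simp only [hf, this]
      exact val_add_one_of_ne hn1 hyne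
    rcases hadj2 with h | h
    · exact Or.inl (step u v hu' hv' h)
    · exact Or.inr (step v u hv' hu' h)
  set S := t.image f with hS
  have hSne : S.Nonempty := ht.image f
  set p := S.min' hSne with hp
  set q := S.max' hSne with hq
  obtain ⟨u, hu, hfu⟩ := Finset.mem_image.1 (S.min'_mem hSne)
  obtain ⟨v, hv, hfv⟩ := Finset.mem_image.1 (S.max'_mem hSne)
  have hnogap : ∀ r, p ≤ r → r ≤ q → ∃ x ∈ t, f x = r := by
    intro r h1 h2
    have hu' : (u : Fin n) ∈ (t : Set (Fin n)) := by exact_mod_cast hu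
    have hv' : (v : Fin n) ∈ (t : Set (Fin n)) := by exact_mod_cast hv
    obtain ⟨w⟩ := hconn.preconnected ⟨u, hu'⟩ ⟨v, hv'⟩
    obtain ⟨x, hx, hfx⟩ := walk_ivt f hadjf w r (by simpa [hfu] using h1) (by simpa [hfv] using h2)
    exact ⟨x, by exact_mod_cast hx, hfx⟩
  have hq2 : q ≤ n - 2 := by rw [hq, ← hfv]; exact fne v hv
  have hpq : p ≤ q := Finset.min'_le S q (S.max'_mem hSne)
  refine ⟨c + 1 + (p : Fin n), q - p + 1, by omega, by omega, ?_⟩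
  ext x
  rw [mem_itv]
  constructor
  · intro hx
    have h1 : p ≤ f x := Finset.min'_le S _ (Finset.mem_image_of_mem f hx)
    have h2 : f x ≤ q := Finset.le_max' S _ (Finset.mem_image_of_mem f hx)
    refine ⟨f x - p, by omega, ?_⟩
    have hx2 : ((f x : ℕ) : Fin n) = x - (c+1) := Fin.cast_val_eq_self _
    have : ((p + (f x - p) : ℕ) : Fin n) = x - (c+1) := by rw [show p + (f x - p) = f x by omega, hx2]
    push_cast at this
    linear_combination -this
  · rintro ⟨i, hi, rfl⟩
    have hfx : f (c + 1 + (p:Fin n) + (i:Fin n)) = p + i := by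
      simp only [hf]
      have : c + 1 + (p:Fin n) + (i:Fin n) - (c+1) = ((p + i : ℕ) : Fin n) := by push_cast; ring
      rw [this, Fin.val_natCast, Nat.mod_eq_of_lt (by omega)]
    obtain ⟨y, hy, hfy⟩ := hnogap (p + i) (by omega) (by omega)
    have : y = c + 1 + (p:Fin n) + (i:Fin n) := finj (by rw [hfy, hfx])
    exact this ▸ hy

lemma tb_isTube (hn : 3 ≤ n) {x k : ℕ} (hk1 : 1 ≤ k) (hk2 : k ≤ n-1) :
    IsTube (SimpleGraph.cycleGraph n) (tb n x k) := by
  refine ⟨⟨stt n x k, self_mem_itv hk1⟩, ?_, itv_connected hn _ hk1⟩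
  intro h
  have := congrArg Finset.card h
  rw [card_tb (by omega), Finset.card_univ, Fintype.card_fin] at this
  omega

lemma Tn_tubing (hn : 3 ≤ n) (x : ℕ) : IsTubing (SimpleGraph.cycleGraph n) (Tn n x) := by
  constructor
  · intro t ht
    obtain ⟨k, h1, h2, rfl⟩ := mem_Tn.1 ht
    exact tb_isTube hn h1 h2
  · intro s hs t ht hne
    obtain ⟨k, hk1, hk2, rfl⟩ := mem_Tn.1 (Finset.mem_coe.1 hs)
    obtain ⟨l, hl1, hl2, rfl⟩ := mem_Tn.1 (Finset.mem_coe.1 ht)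
    rcases le_total k l with h | h
    · exact Or.inl (tb_subset x hk1 h)
    · exact Or.inr (Or.inl (tb_subset x hl1 h))

lemma Tn_chain (hn : 3 ≤ n) (x : ℕ) :
    ∀ t₁ ∈ Tn n x, ∀ t₂ ∈ Tn n x, t₁ ⊆ t₂ ∨ t₂ ⊆ t₁ := by
  intro t₁ h₁ t₂ h₂
  obtain ⟨k, hk1, hk2, rfl⟩ := mem_Tn.1 h₁
  obtain ⟨l, hl1, hl2, rfl⟩ := mem_Tn.1 h₂
  rcases le_total k l with h | h
  · exact Or.inl (tb_subset x hk1 h)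
  · exact Or.inr (tb_subset x hl1 h)

lemma Tn_max (hn : 3 ≤ n) (x : ℕ) :
    ∀ T', IsTubing (SimpleGraph.cycleGraph n) T' → Tn n x ⊆ T' → T' = Tn n x := by
  intro T' hT' hsub
  apply Finset.Subset.antisymm _ hsub
  intro t ht
  by_contra htn
  obtain ⟨hne, hneu, hconn⟩ := hT'.1 t ht
  have hcard : t.card < n := by
    have h := (Finset.card_lt_iff_ne_univ t).2 hneu
    rwa [Fintype.card_fin] at h
  have hcard1 : 1 ≤ t.card := Finset.card_pos.2 hne
  have hcompat : ∀ k, 1 ≤ k → k ≤ n-1 → TubeCompat (SimpleGraph.cycleGraph n) t (tb n x k) := by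
    intro k h1 h2
    have hmem : tb n x k ∈ T' := hsub (mem_Tn.2 ⟨k, h1, h2, rfl⟩)
    have hne2 : t ≠ tb n x k := fun h => htn (h ▸ mem_Tn.2 ⟨k, h1, h2, rfl⟩)
    exact hT'.2 (Finset.mem_coe.2 ht) (Finset.mem_coe.2 hmem) hne2
  by_cases hsubtop : t ⊆ tb n x (n-1)
  · have hex : ∃ k, t ⊆ tb n x (k+1) := ⟨n-2, by rw [show n-2+1 = n-1 by omega]; exact hsubtop⟩
    have hfind := Nat.find_spec hex
    have hm0le : Nat.find hex ≤ n - 2 :=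
      Nat.find_le (by rw [show n-2+1 = n-1 by omega]; exact hsubtop)
    set m0 := Nat.find hex with hm0
    have hkm2 : m0 + 1 ≤ n - 1 := by omega
    have htcard : t.card ≤ m0 + 1 := by
      have h := Finset.card_le_card hfind
      rwa [card_tb (by omega)] at h
    have htne : t ≠ tb n x (m0+1) :=
      fun h => htn (h ▸ mem_Tn.2 ⟨m0+1, by omega, hkm2, rfl⟩)
    have htlt : t.card < m0 + 1 := by
      rcases lt_or_eq_of_le htcard with h | h
      · exact h
      · exact absurd (Finset.eq_of_subset_of_card_le hfind (by rw [card_tb (by omega)]; omega)) htne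
    have hm01 : 1 ≤ m0 := by omega
    have hnotsub : ¬ t ⊆ tb n x m0 := by
      have h := Nat.find_min hex (show m0 - 1 < m0 by omega)
      rwa [show m0 - 1 + 1 = m0 by omega] at h
    have hnotsup : ¬ tb n x m0 ⊆ t := by
      intro h
      have h1 := Finset.card_le_card h
      rw [card_tb (by omega)] at h1
      have heq : tb n x m0 = t := Finset.eq_of_subset_of_card_le h (by rw [card_tb (by omega)]; omega)
      exact htn (heq ▸ mem_Tn.2 ⟨m0, hm01, by omega, rfl⟩)
    have hunion : t ∪ tb n x m0 = tb n x (m0+1) := by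
      obtain ⟨c, hc1, hc2⟩ := Finset.not_subset.1 hnotsub
      have hsubU : t ∪ tb n x m0 ⊆ tb n x (m0+1) :=
        Finset.union_subset hfind (tb_subset x hm01 (by omega))
      have hins : insert c (tb n x m0) ⊆ t ∪ tb n x m0 :=
        Finset.insert_subset (Finset.mem_union_left _ hc1) Finset.subset_union_right
      have hcardins : (insert c (tb n x m0)).card = m0 + 1 := by
        rw [Finset.card_insert_of_notMem hc2, card_tb (by omega)]
      have h1 := Finset.card_le_card hins
      exact Finset.eq_of_subset_of_card_le hsubU (by rw [card_tb (by omega)]; omega)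
    rcases hcompat m0 hm01 (by omega) with h | h | h
    · exact hnotsub h
    · exact hnotsup h
    · apply h
      rw [hunion]
      exact itv_connected hn _ (by omega)
  · obtain ⟨c, hc1, hc2⟩ := Finset.not_subset.1 hsubtop
    have huniv : t ∪ tb n x (n-1) = Finset.univ := by
      apply Finset.eq_univ_of_card
      have hins : insert c (tb n x (n-1)) ⊆ t ∪ tb n x (n-1) :=
        Finset.insert_subset (Finset.mem_union_left _ hc1) Finset.subset_union_right
      have hcardins : (insert c (tb n x (n-1))).card = n := by
        rw [Finset.card_insert_of_notMem hc2, card_tb (by omega)]; omega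
      have h1 := Finset.card_le_card hins
      have h2 := Finset.card_le_univ (t ∪ tb n x (n-1))
      have h3 : Fintype.card (Fin n) = n := Fintype.card_fin n
      omega
    rcases hcompat (n-1) (by omega) (by omega) with h | h | h
    · exact hsubtop h
    · have heq : tb n x (n-1) = t :=
        Finset.eq_of_subset_of_card_le h (by rw [card_tb (by omega)]; omega)
      exact htn (heq ▸ mem_Tn.2 ⟨n-1, by omega, le_refl _, rfl⟩)
    · apply h
      rw [huniv]
      exact univ_connected hn

lemma tb_mem_iff {x : ℕ} {b : Fin n} {k : ℕ} (hn : 3 ≤ n) (hk1 : 1 ≤ k) (hk2 : k ≤ n-1) :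
    itv b k ∈ Tn n x ↔ stt n x k = b := by
  constructor
  · intro h
    obtain ⟨k', h1, h2, heq⟩ := mem_Tn.1 h
    have hkk : k = k' := by
      have h3 := congrArg Finset.card heq
      rwa [card_itv (by omega), card_tb (by omega)] at h3
    subst hkk
    exact itv_start_inj hk1 hk2 heq.symm
  · intro h
    rw [← h]
    exact mem_Tn.2 ⟨k, hk1, hk2, rfl⟩

lemma natCast_mod_fin (y : ℕ) : ((y % n : ℕ) : Fin n) = (y : Fin n) := by
  apply Fin.val_injective
  rw [Fin.val_natCast, Fin.val_natCast, Nat.mod_mod_of_dvd y dvd_rfl]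

lemma stt_eq_iff {x k : ℕ} {b : Fin n} (hn : 3 ≤ n) :
    stt n x k = b ↔ ((x + k - 1)/(n-1)) % n = (n - b.val) % n := by
  have hvn : (n - b.val) % n < n := Nat.mod_lt _ (by omega)
  have hvb : (((n - b.val) % n : ℕ) : Fin n) = -b := by
    rw [natCast_mod_fin, Nat.cast_sub (le_of_lt b.isLt), Fin.natCast_self,
      Fin.cast_val_eq_self, zero_sub]
  rw [stt]
  constructor
  · intro h
    have h2 : (((x + k - 1)/(n-1) : ℕ) : Fin n) = -b := by linear_combination -h
    rw [← hvb] at h2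
    have h3 := congrArg Fin.val h2
    rw [Fin.val_natCast, Fin.val_natCast, Nat.mod_eq_of_lt hvn] at h3
    exact h3
  · intro h
    have h2 : (((x + k - 1)/(n-1) : ℕ) : Fin n) = (((n - b.val) % n : ℕ) : Fin n) := by
      apply Fin.val_injective
      rw [Fin.val_natCast, Fin.val_natCast, h]
      exact (Nat.mod_mod_of_dvd _ dvd_rfl).symm
    rw [hvb] at h2
    linear_combination -h2

lemma occ_key (hn : 3 ≤ n) {k v x : ℕ} (hk1 : 1 ≤ k) (hk : k ≤ n-1) (hv : v < n)
    (hx : x < n*(n-1)) :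
    ((x + k - 1)/(n-1)) % n = v ↔
      ∃ i, i < n-1 ∧ (x + k) % (n*(n-1)) = (v*(n-1) + 1 + i) % (n*(n-1)) := by
  have hm0 : 0 < n - 1 := by omega
  set m := n - 1 with hm
  set N := n * m with hNdef
  set y := x + k - 1 with hy
  have hyx : y + 1 = x + k := by omega
  set q := y / m with hqdef
  set r := y % m with hrdef
  have hdm : q * m + r = y := by rw [hqdef, hrdef, mul_comm]; exact Nat.div_add_mod y m
  have hrm : r < m := Nat.mod_lt _ hm0
  have hvm1 : (v+1) * m ≤ n * m := Nat.mul_le_mul_right m (by omega)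
  have hvm : v * m + m ≤ N := by rw [add_mul, one_mul] at hvm1; omega
  have hmN : m ≤ N := Nat.le_mul_of_pos_left m (by omega)
  rcases Nat.lt_or_ge y N with hcase | hcase
  · have hqn : q < n := by
      rw [hqdef, Nat.div_lt_iff_lt_mul hm0]
      omega
    constructor
    · intro h
      rw [Nat.mod_eq_of_lt hqn] at h
      subst h
      exact ⟨r, hrm, by congr 1; omega⟩
    · rintro ⟨i, hi, hmod⟩
      have hxk : x + k ≤ N := by omega
      have hvi : v*m + 1 + i ≤ N := by omega
      have heq : x + k = v*m + 1 + i := by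
        rcases eq_or_lt_of_le hxk with hE | hL
        · rw [hE, Nat.mod_self] at hmod
          rcases eq_or_lt_of_le hvi with hE2 | hL2
          · omega
          · rw [Nat.mod_eq_of_lt hL2] at hmod; omega
        · rw [Nat.mod_eq_of_lt hL] at hmod
          rcases eq_or_lt_of_le hvi with hE2 | hL2
          · rw [hE2, Nat.mod_self] at hmod; omega
          · rw [Nat.mod_eq_of_lt hL2] at hmod; omega
      have hqv : q = v := by
        rcases lt_trichotomy q v with h' | h' | h'
        · have h2 := Nat.mul_le_mul_right m (show q+1 ≤ v by omega)
          rw [add_mul, one_mul] at h2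
          omega
        · exact h'
        · have h2 := Nat.mul_le_mul_right m (show v+1 ≤ q by omega)
          rw [add_mul, one_mul] at h2
          omega
      rw [hqv, Nat.mod_eq_of_lt hv]
  · set s := y - N with hsdef
    have hsm : s + 2 ≤ m := by omega
    have hqn : q = n := by
      rw [hqdef, show y = s + n*m by omega, Nat.add_mul_div_right _ _ hm0,
        Nat.div_eq_of_lt (by omega)]
      omega
    constructor
    · intro h
      rw [hqn, Nat.mod_self] at h
      refine ⟨s, by omega, ?_⟩
      rw [← h, zero_mul]
      rw [show x + k = (s+1) + N by omega, Nat.add_mod_right]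
      congr 1
      omega
    · rintro ⟨i, hi, hmod⟩
      rw [hqn, Nat.mod_self]
      have hmod1 : (x+k) % N = s + 1 := by
        rw [show x + k = (s+1) + N by omega, Nat.add_mod_right, Nat.mod_eq_of_lt (by omega)]
      rcases eq_or_lt_of_le (show v*m+1+i ≤ N by omega) with hE2 | hL2
      · rw [hE2, Nat.mod_self] at hmod; omega
      · rw [Nat.mod_eq_of_lt hL2] at hmod
        by_contra hv0
        have hv1 : 1 ≤ v := by omega
        have h2 : 1 * m ≤ v * m := Nat.mul_le_mul_right m hv1
        rw [one_mul] at h2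
        have h4 : v * m + i = s := by omega
        omega

/-- The cyclohedron has a facet-Hamiltonian cycle through nested tubings: for `n ≥ 3`
there is a cyclic sequence of `n(n-1)` nested maximal tubings of the cycle `C_n`,
consecutive ones differing by exchanging exactly one tube, such that every tube of `C_n`
appears in the tubings of exactly one nonempty contiguous cyclic interval. -/
theorem cyclohedron_facet_hamiltonian_cycle (n : ℕ) (hn : 3 ≤ n) :
    ∃ T : ZMod (n * (n - 1)) → Finset (Finset (Fin n)),
      (∀ j, IsMaxTubing (SimpleGraph.cycleGraph n) (T j)) ∧
      (∀ j, ∀ t₁ ∈ T j, ∀ t₂ ∈ T j, t₁ ⊆ t₂ ∨ t₂ ⊆ t₁) ∧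
      (∀ j, ((T j) \ (T (j + 1))).card = 1 ∧ ((T (j + 1)) \ (T j)).card = 1) ∧
      (∀ t : Finset (Fin n), IsTube (SimpleGraph.cycleGraph n) t →
        ∃ (a : ZMod (n * (n - 1))) (len : ℕ), 1 ≤ len ∧ len ≤ n * (n - 1) ∧
          ∀ j, t ∈ T j ↔ ∃ i : ℕ, i < len ∧ j = a + (i : ZMod (n * (n - 1)))) := by
  haveI : NeZero n := ⟨by omega⟩
  haveI : NeZero (n * (n - 1)) := ⟨Nat.mul_ne_zero (by omega) (by omega)⟩
  have hj_cast : ∀ j : ZMod (n * (n-1)), ((j.val : ℕ) : ZMod (n * (n-1))) = j := by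
    intro j; rw [ZMod.natCast_val, ZMod.cast_id]
  refine ⟨fun j => Tn n j.val, ?_, ?_, ?_, ?_⟩
  · intro j; exact ⟨Tn_tubing hn _, Tn_max hn _⟩
  · intro j; exact Tn_chain hn _
  · intro j
    have hT1 : Tn n ((j+1).val) = Tn n (j.val + 1) := by
      have h1 : ((j.val + 1 : ℕ) : ZMod (n * (n-1))) = j + 1 := by
        push_cast [hj_cast]; ring
      rw [← h1, ZMod.val_natCast]
      exact Tn_mod hn _
    constructor
    · show ((Tn n j.val) \ (Tn n ((j+1).val))).card = 1
      rw [hT1, Tn_sdiff₁ hn j.val, Finset.card_singleton]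
    · show ((Tn n ((j+1).val)) \ (Tn n j.val)).card = 1
      rw [hT1, Tn_sdiff₂ hn j.val, Finset.card_singleton]
  · intro t ht
    obtain ⟨hne, hneu, hconn⟩ := ht
    obtain ⟨b, k, hk1, hk2, rfl⟩ := tube_eq_itv hn hne hneu hconn
    have hvlt : (n - b.val) % n < n := Nat.mod_lt _ (by omega)
    have hkN : k ≤ n * (n-1) := le_trans hk2 (Nat.le_mul_of_pos_left _ (by omega))
    refine ⟨(((n - b.val) % n * (n-1) + 1 + (n * (n-1) - k) : ℕ) : ZMod (n * (n-1))), n - 1,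
      by omega, Nat.le_mul_of_pos_left _ (by omega), ?_⟩
    intro j
    have hjval : j.val < n * (n-1) := ZMod.val_lt j
    show itv b k ∈ Tn n j.val ↔ _
    rw [tb_mem_iff hn hk1 hk2, stt_eq_iff hn,
      occ_key hn hk1 hk2 hvlt hjval]
    constructor
    · rintro ⟨i, hi, hmod⟩
      refine ⟨i, hi, ?_⟩
      rw [← hj_cast j]
      have hcomb : (((n - b.val) % n * (n-1) + 1 + (n * (n-1) - k) : ℕ) : ZMod (n * (n-1)))
          + (i : ZMod (n * (n-1)))
          = (((n - b.val) % n * (n-1) + 1 + (n * (n-1) - k) + i : ℕ) : ZMod (n * (n-1))) := by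
        push_cast; ring
      rw [hcomb, ZMod.natCast_eq_natCast_iff]
      have hmod' : Nat.ModEq (n * (n-1)) (j.val + k) ((n - b.val) % n * (n-1) + 1 + i) := hmod
      have h2 : Nat.ModEq (n * (n-1)) (j.val + k)
          (((n - b.val) % n * (n-1) + 1 + (n * (n-1) - k) + i) + k) := by
        rw [show ((n - b.val) % n * (n-1) + 1 + (n * (n-1) - k) + i) + k
          = ((n - b.val) % n * (n-1) + 1 + i) + n * (n-1) by omega]
        exact hmod'.trans (Nat.add_mod_right _ _).symm
      exact Nat.ModEq.add_right_cancel' k h2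
    · rintro ⟨i, hi, hjeq⟩
      refine ⟨i, hi, ?_⟩
      rw [← hj_cast j] at hjeq
      have hcomb : (((n - b.val) % n * (n-1) + 1 + (n * (n-1) - k) : ℕ) : ZMod (n * (n-1)))
          + (i : ZMod (n * (n-1)))
          = (((n - b.val) % n * (n-1) + 1 + (n * (n-1) - k) + i : ℕ) : ZMod (n * (n-1))) := by
        push_cast; ring
      rw [hcomb, ZMod.natCast_eq_natCast_iff] at hjeq
      have h2 : Nat.ModEq (n * (n-1)) (j.val + k)
          (((n - b.val) % n * (n-1) + 1 + (n * (n-1) - k) + i) + k) := hjeq.add_right k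
      rw [show ((n - b.val) % n * (n-1) + 1 + (n * (n-1) - k) + i) + k
          = ((n - b.val) % n * (n-1) + 1 + i) + n * (n-1) by omega] at h2
      exact h2.trans (Nat.add_mod_right _ _)
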